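/- Combined deterministic consistency bound (the deterministic core of Theorem 1): Let H11 ∈ ℝ^{b×b} be symmetric, H12 ∈ ℝ^{b×m}, H21 := H12ᵀ, H22 ∈ ℝ^{m×m} symmetric, and let Λ_min, Λ'_min, Λ_max > 0 satisfy: λ_min(−H11) ≥ Λ'_min, λ_min(−H21·H11⁻¹·H12) ≥ Λ_min, ‖H21·H11⁻¹‖ ≤ Λ_max, ‖H11⁻¹·H12‖ ≤ Λ_max, and 2‖H22‖ ≤ Λ_min. Suppose vectors a ∈ ℝ^b, u ∈ ℝ^b, v ∈ ℝ^m satisfy a + H11·u + H12·v = 0 and H21·u + H22·v = 0. Then ‖v‖ ≤ (2·Λ_max/Λ_min)·‖a‖ and ‖u‖ ≤ ((2·Λ_max²·Λ'_min + Λ_min)/(Λ_min·Λ'_min))·‖a‖. -/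

import Mathlib

open Matrix

/-- The Euclidean norm of a vector in `ℝ^k` represented as `Fin k → ℝ`. -/
noncomputable def euclNorm {k : ℕ} (v : Fin k → ℝ) : ℝ := Real.sqrt (v ⬝ᵥ v)

lemma dot_self_nonneg' {k : ℕ} (x : Fin k → ℝ) : 0 ≤ x ⬝ᵥ x :=
  Finset.sum_nonneg fun i _ => mul_self_nonneg _

lemma euclNorm_nonneg {k : ℕ} (x : Fin k → ℝ) : 0 ≤ euclNorm x := Real.sqrt_nonneg _

lemma euclNorm_sq {k : ℕ} (x : Fin k → ℝ) : euclNorm x * euclNorm x = x ⬝ᵥ x :=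
  Real.mul_self_sqrt (dot_self_nonneg' x)

lemma euclNorm_eq_norm {k : ℕ} (x : Fin k → ℝ) :
    euclNorm x = ‖(WithLp.equiv 2 (Fin k → ℝ)).symm x‖ := by
  rw [EuclideanSpace.norm_eq]
  unfold euclNorm dotProduct
  congr 1
  refine Finset.sum_congr rfl fun i _ => ?_
  rw [Real.norm_eq_abs, sq_abs, sq]
  rfl

lemma dot_le_norm {k : ℕ} (x y : Fin k → ℝ) : x ⬝ᵥ y ≤ euclNorm x * euclNorm y := by
  rw [euclNorm_eq_norm, euclNorm_eq_norm]
  have h := real_inner_le_norm ((WithLp.equiv 2 (Fin k → ℝ)).symm x)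
    ((WithLp.equiv 2 (Fin k → ℝ)).symm y)
  refine le_trans (le_of_eq ?_) h
  simp [PiLp.inner_apply, RCLike.inner_apply, dotProduct, mul_comm]

lemma euclNorm_neg {k : ℕ} (x : Fin k → ℝ) : euclNorm (-x) = euclNorm x := by
  unfold euclNorm
  rw [neg_dotProduct, dotProduct_neg, neg_neg]

lemma neg_norm_le_dot {k : ℕ} (x y : Fin k → ℝ) :
    -(euclNorm x * euclNorm y) ≤ x ⬝ᵥ y := by
  have h := dot_le_norm x (-y)
  rw [dotProduct_neg, euclNorm_neg] at h
  linarith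

lemma euclNorm_add_le {k : ℕ} (x y : Fin k → ℝ) :
    euclNorm (x + y) ≤ euclNorm x + euclNorm y := by
  rw [euclNorm_eq_norm, euclNorm_eq_norm, euclNorm_eq_norm]
  exact norm_add_le _ _

/-- **Combined deterministic consistency bound** (the deterministic core of Theorem 1).
Under the eigenvalue and operator-norm conditions on the blocks of the Hessian, any
solution `(u, v)` of the mean-value first-order equations
`a + H11 u + H12 v = 0`, `H21 u + H22 v = 0` (with `H21 = H12ᵀ`) satisfies
`‖v‖ ≤ (2 Λmax / Λmin) ‖a‖` and
`‖u‖ ≤ ((2 Λmax² Λ'min + Λmin) / (Λmin Λ'min)) ‖a‖`. -/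
theorem combined_consistency_bound {b m : ℕ}
    (H11 : Matrix (Fin b) (Fin b) ℝ) (H12 : Matrix (Fin b) (Fin m) ℝ)
    (H22 : Matrix (Fin m) (Fin m) ℝ)
    (hH11sym : H11.IsSymm) (hH22sym : H22.IsSymm)
    (Λmin Λ'min Λmax : ℝ) (hΛmin : 0 < Λmin) (hΛ'min : 0 < Λ'min) (hΛmax : 0 < Λmax)
    -- λ_min(-H11) ≥ Λ'min:
    (hminH11 : ∀ x : Fin b → ℝ, Λ'min * (x ⬝ᵥ x) ≤ x ⬝ᵥ (-H11).mulVec x)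
    -- λ_min(-H21 H11⁻¹ H12) ≥ Λmin:
    (hmin : ∀ x : Fin m → ℝ, Λmin * (x ⬝ᵥ x) ≤ x ⬝ᵥ (-(H12ᵀ * H11⁻¹ * H12)).mulVec x)
    -- ‖H21 H11⁻¹‖ ≤ Λmax:
    (hop1 : ∀ x : Fin b → ℝ, euclNorm ((H12ᵀ * H11⁻¹).mulVec x) ≤ Λmax * euclNorm x)
    -- ‖H11⁻¹ H12‖ ≤ Λmax:
    (hop2 : ∀ x : Fin m → ℝ, euclNorm ((H11⁻¹ * H12).mulVec x) ≤ Λmax * euclNorm x)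
    -- 2 ‖H22‖ ≤ Λmin:
    (hH22 : ∀ x : Fin m → ℝ, 2 * euclNorm (H22.mulVec x) ≤ Λmin * euclNorm x)
    (a u : Fin b → ℝ) (v : Fin m → ℝ)
    (h1 : a + H11.mulVec u + H12.mulVec v = 0)
    (h2 : H12ᵀ.mulVec u + H22.mulVec v = 0) :
    euclNorm v ≤ 2 * Λmax / Λmin * euclNorm a ∧
    euclNorm u ≤ (2 * Λmax ^ 2 * Λ'min + Λmin) / (Λmin * Λ'min) * euclNorm a := by
  -- -H11 is positive definite, hence H11 is invertible
  have hpd : (-H11).PosDef := by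
    refine Matrix.PosDef.of_dotProduct_mulVec_pos ?_ ?_
    · show (-H11)ᴴ = -H11
      ext i j
      simp [conjTranspose_apply, ← hH11sym.apply i j]
    · intro x hx
      have h0 : 0 < x ⬝ᵥ x :=
        lt_of_le_of_ne (dot_self_nonneg' x) (fun h => hx (dotProduct_self_eq_zero.mp h.symm))
      have := hminH11 x
      calc (0:ℝ) < Λ'min * (x ⬝ᵥ x) := by positivity
        _ ≤ x ⬝ᵥ (-H11).mulVec x := this
        _ = dotProduct (star x) ((-H11) *ᵥ x) := by simp
  have hdet : IsUnit H11.det := by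
    have h1 : (0:ℝ) < (-H11).det := hpd.det_pos
    rw [Matrix.det_neg] at h1
    have : H11.det ≠ 0 := by
      intro h; rw [h, mul_zero] at h1; exact lt_irrefl _ h1
    exact isUnit_iff_ne_zero.mpr this
  have hinv : H11⁻¹ * H11 = 1 := Matrix.nonsing_inv_mul H11 hdet
  have hinv' : H11 * H11⁻¹ = 1 := Matrix.mul_nonsing_inv H11 hdet
  -- solve for u
  have h1' : H11.mulVec u = -(a + H12.mulVec v) := by
    funext i
    have := congrFun h1 i
    simp only [Pi.add_apply, Pi.zero_apply, Pi.neg_apply] at this ⊢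
    linarith
  have hu : u = -(H11⁻¹.mulVec a + (H11⁻¹ * H12).mulVec v) := by
    have huu : H11⁻¹.mulVec (H11.mulVec u) = u := by
      rw [Matrix.mulVec_mulVec, hinv, Matrix.one_mulVec]
    rw [← huu, h1', Matrix.mulVec_neg, Matrix.mulVec_add, Matrix.mulVec_mulVec]
  -- key identity for v
  have h2' : H12ᵀ.mulVec u = -(H22.mulVec v) := by
    funext i
    have := congrFun h2 i
    simp only [Pi.add_apply, Pi.zero_apply, Pi.neg_apply] at this ⊢
    linarith
  have hv : (-(H12ᵀ * H11⁻¹ * H12)).mulVec v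
      = (H12ᵀ * H11⁻¹).mulVec a - H22.mulVec v := by
    rw [hu] at h2'
    rw [Matrix.mulVec_neg, Matrix.mulVec_add, Matrix.mulVec_mulVec, Matrix.mulVec_mulVec] at h2'
    rw [Matrix.neg_mulVec]
    funext i
    have := congrFun h2' i
    simp only [Pi.neg_apply, Pi.add_apply, Pi.sub_apply, Matrix.mul_assoc] at this ⊢
    linarith
  set Nv := euclNorm v with hNv
  set Na := euclNorm a with hNa
  have hNv0 : 0 ≤ Nv := euclNorm_nonneg v
  have hNa0 : 0 ≤ Na := euclNorm_nonneg a
  -- the bound on v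
  have key : Λmin * (Nv * Nv) ≤ Nv * (Λmax * Na) + Nv * (Λmin / 2 * Nv) := by
    have e1 : Λmin * (v ⬝ᵥ v) ≤ v ⬝ᵥ ((H12ᵀ * H11⁻¹).mulVec a) - v ⬝ᵥ (H22.mulVec v) := by
      have := hmin v
      rw [hv, dotProduct_sub] at this
      exact this
    have e2 : v ⬝ᵥ ((H12ᵀ * H11⁻¹).mulVec a) ≤ Nv * (Λmax * Na) := by
      calc v ⬝ᵥ ((H12ᵀ * H11⁻¹).mulVec a)
          ≤ Nv * euclNorm ((H12ᵀ * H11⁻¹).mulVec a) := dot_le_norm _ _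
        _ ≤ Nv * (Λmax * Na) := by
            apply mul_le_mul_of_nonneg_left (hop1 a) hNv0
    have e3 : -(v ⬝ᵥ (H22.mulVec v)) ≤ Nv * (Λmin / 2 * Nv) := by
      have h4 := neg_norm_le_dot v (H22.mulVec v)
      have h5 : euclNorm (H22.mulVec v) ≤ Λmin / 2 * Nv := by
        have := hH22 v; linarith
      have h6 : Nv * euclNorm (H22.mulVec v) ≤ Nv * (Λmin / 2 * Nv) :=
        mul_le_mul_of_nonneg_left h5 hNv0
      linarith
    rw [← euclNorm_sq] at e1
    linarith
  have hvbound : Nv ≤ 2 * Λmax / Λmin * Na := by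
    rcases eq_or_lt_of_le hNv0 with h | h
    · rw [← h]; positivity
    · rw [div_mul_eq_mul_div, le_div_iff₀ hΛmin]
      nlinarith
  refine ⟨hvbound, ?_⟩
  -- the bound on u
  set w := H11⁻¹.mulVec a with hw
  set z := (H11⁻¹ * H12).mulVec v with hz
  have hNw : Λ'min * euclNorm w ≤ Na := by
    have hHw : H11.mulVec w = a := by
      rw [hw, Matrix.mulVec_mulVec, hinv', Matrix.one_mulVec]
    have e1 : Λ'min * (w ⬝ᵥ w) ≤ -(w ⬝ᵥ a) := by
      have := hminH11 w
      rw [Matrix.neg_mulVec, dotProduct_neg, hHw] at this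
      exact this
    have e2 : -(euclNorm w * Na) ≤ w ⬝ᵥ a := neg_norm_le_dot w a
    rw [← euclNorm_sq] at e1
    rcases eq_or_lt_of_le (euclNorm_nonneg w) with h | h
    · rw [← h]; simpa using hNa0
    · nlinarith
  have hNz : euclNorm z ≤ Λmax * Nv := hop2 v
  have hu' : euclNorm u ≤ euclNorm w + euclNorm z := by
    rw [hu, euclNorm_neg]
    exact euclNorm_add_le w z
  have hwn : euclNorm w ≤ Na / Λ'min := by
    rw [le_div_iff₀ hΛ'min]
    linarith [hNw]
  have hNz' : euclNorm z ≤ Λmax * (2 * Λmax / Λmin * Na) := by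
    calc euclNorm z ≤ Λmax * Nv := hNz
      _ ≤ Λmax * (2 * Λmax / Λmin * Na) :=
          mul_le_mul_of_nonneg_left hvbound (le_of_lt hΛmax)
  have : euclNorm u ≤ Na / Λ'min + Λmax * (2 * Λmax / Λmin * Na) := by linarith
  calc euclNorm u ≤ Na / Λ'min + Λmax * (2 * Λmax / Λmin * Na) := this
    _ = (2 * Λmax ^ 2 * Λ'min + Λmin) / (Λmin * Λ'min) * Na := by
        field_simp
        ring
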